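/- arXiv:1911.01973 — 2 statements merged into one kernel-verified Lean document; each statement's English description precedes it below -/
import Mathlib

section
/- Let φ be a CNF formula with clauses C_1, …, C_m over a variable set partitioned as V = V_A ⊔ V_B. Then φ is satisfiable (there is a full assignment σ : V → Bool satisfying every clause) if and only if there exist partial assignments a : V_A → Bool and b : V_B → Bool such that the integer inner product ⟨f_A(a), f_B(b)⟩ = 0. This is the correctness of the fine-grained reduction from CNF-SAT to Orthogonal Vectors. -/
/- A literal over the variable set `V_A ⊕ V_B` is a variable together with a
polarity (`true` = positive, `false` = negative). A literal `(v, pol)` evaluates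
to true under an assignment `σ` exactly when `σ v = pol`. -/

/-- The literal `l` is over a variable in `V_A` and evaluates to true under the
partial assignment `a : V_A → Bool`. -/
def litTrueA {VA VB : Type} (a : VA → Bool) (l : (VA ⊕ VB) × Bool) : Bool :=
  Sum.elim (fun v => a v == l.2) (fun _ => false) l.1

/-- The literal `l` is over a variable in `V_B` and evaluates to true under the
partial assignment `b : V_B → Bool`. -/
def litTrueB {VA VB : Type} (b : VB → Bool) (l : (VA ⊕ VB) × Bool) : Bool :=
  Sum.elim (fun _ => false) (fun v => b v == l.2) l.1

/-- The `j`-th coordinate of the vector `f_A(a) ∈ {0,1}^m`: it is `0` if some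
literal of clause `C j` over a variable in `V_A` evaluates to true under `a`,
and `1` otherwise. -/
def fA {VA VB : Type} (m : ℕ) (C : Fin m → Finset ((VA ⊕ VB) × Bool))
    (a : VA → Bool) (j : Fin m) : ℤ :=
  if ∃ l ∈ C j, litTrueA a l = true then 0 else 1

/-- The `j`-th coordinate of the vector `f_B(b) ∈ {0,1}^m`. -/
def fB {VA VB : Type} (m : ℕ) (C : Fin m → Finset ((VA ⊕ VB) × Bool))
    (b : VB → Bool) (j : Fin m) : ℤ :=
  if ∃ l ∈ C j, litTrueB b l = true then 0 else 1

/-- Correctness of the fine-grained reduction from CNF-SAT to Orthogonal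
Vectors: a CNF formula with clauses `C 1, …, C m` over the variable set
`V_A ⊔ V_B` is satisfiable iff there exist partial assignments `a : V_A → Bool`
and `b : V_B → Bool` with `⟨f_A(a), f_B(b)⟩ = 0`. -/
theorem cnf_sat_iff_exists_orthogonal_pair
    {VA VB : Type} (m : ℕ) (C : Fin m → Finset ((VA ⊕ VB) × Bool)) :
    (∃ σ : VA ⊕ VB → Bool, ∀ j : Fin m, ∃ l ∈ C j, σ l.1 = l.2)
      ↔ ∃ (a : VA → Bool) (b : VB → Bool),
          ∑ j : Fin m, fA m C a j * fB m C b j = 0 := by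
  have key : ∀ (a : VA → Bool) (b : VB → Bool) (j : Fin m),
      fA m C a j * fB m C b j = 0 ↔ ∃ l ∈ C j, Sum.elim a b l.1 = l.2 := by
    intro a b j
    unfold fA fB
    constructor
    · intro h
      rcases mul_eq_zero.1 h with h | h
      · by_cases hc : ∃ l ∈ C j, litTrueA a l = true
        · obtain ⟨l, hl, ht⟩ := hc
          refine ⟨l, hl, ?_⟩
          cases hv : l.1 with
          | inl v => simp [litTrueA, hv] at ht; simp [hv, ht]
          | inr v => simp [litTrueA, hv] at ht
        · simp [hc] at h
      · by_cases hc : ∃ l ∈ C j, litTrueB b l = true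
        · obtain ⟨l, hl, ht⟩ := hc
          refine ⟨l, hl, ?_⟩
          cases hv : l.1 with
          | inl v => simp [litTrueB, hv] at ht
          | inr v => simp [litTrueB, hv] at ht; simp [hv, ht]
        · simp [hc] at h
    · rintro ⟨l, hl, he⟩
      cases hv : l.1 with
      | inl v =>
        have : ∃ l ∈ C j, litTrueA a l = true := by
          refine ⟨l, hl, ?_⟩; simp [litTrueA, hv]
          rw [hv] at he; simpa using he
        simp [this]
      | inr v =>
        have : ∃ l ∈ C j, litTrueB b l = true := by
          refine ⟨l, hl, ?_⟩; simp [litTrueB, hv]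
          rw [hv] at he; simpa using he
        simp [this]
  have nonneg : ∀ (a : VA → Bool) (b : VB → Bool) (j : Fin m),
      0 ≤ fA m C a j * fB m C b j := by
    intro a b j
    unfold fA fB
    split <;> split <;> norm_num
  constructor
  · rintro ⟨σ, hσ⟩
    refine ⟨fun v => σ (Sum.inl v), fun v => σ (Sum.inr v), ?_⟩
    apply Finset.sum_eq_zero
    intro j _
    rw [key]
    obtain ⟨l, hl, he⟩ := hσ j
    refine ⟨l, hl, ?_⟩
    cases hv : l.1 <;> rw [hv] at he <;> simpa using he
  · rintro ⟨a, b, hsum⟩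
    refine ⟨Sum.elim a b, fun j => ?_⟩
    have := (Finset.sum_eq_zero_iff_of_nonneg (fun j _ => nonneg a b j)).1 hsum j (Finset.mem_univ j)
    exact (key a b j).1 this
end

section
/- Let x, y ∈ ℝ^{D} and let W ∈ ℝ satisfy W ≥ ‖x‖₂² and W ≥ ‖y‖₂². Define x'' = (x, √(W − ‖x‖₂²), 0) ∈ ℝ^{D+2} and y'' = (y, 0, √(W − ‖y‖₂²)) ∈ ℝ^{D+2}. Then ‖x''‖₂² = ‖y''‖₂² = W and ‖x'' − y''‖₂² = 2W − 2⟨x, y⟩. In particular, when x = x' and y = y' arise from the tensoring construction x'_{i,j} = x_i x_j, y'_{i,j} = −y_i y_j for vectors x, y ∈ ℤ^d (so that ⟨x', y'⟩ = −⟨x,y⟩²), one gets ‖x'' − y''‖₂² = 2W + 2(⟨x, y⟩)², hence ‖x'' − y''‖₂² ≥ 2W always, with equality if and only if ⟨x, y⟩ = 0. -/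
/-- `x'' = (x, √(W − ‖x‖₂²), 0) ∈ ℝ^{D+2}`. -/
noncomputable def liftA (D : ℕ) (x : Fin D → ℝ) (W : ℝ) : Fin (D + 2) → ℝ :=
  Fin.append x ![Real.sqrt (W - ∑ i, (x i) ^ 2), 0]

/-- `y'' = (y, 0, √(W − ‖y‖₂²)) ∈ ℝ^{D+2}`. -/
noncomputable def liftB (D : ℕ) (y : Fin D → ℝ) (W : ℝ) : Fin (D + 2) → ℝ :=
  Fin.append y ![0, Real.sqrt (W - ∑ i, (y i) ^ 2)]

/-- Correctness of the reduction from integral Orthogonal Vectors to the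
Bichromatic Closest Pair problem: if `W ≥ ‖x‖₂²` and `W ≥ ‖y‖₂²`, then
`‖x''‖₂² = ‖y''‖₂² = W` and `‖x'' − y''‖₂² = 2W − 2⟨x, y⟩`.  In particular,
when `x` and `y` arise from the tensoring construction on integer vectors
`z, w ∈ ℤ^d` (so that `⟨x, y⟩ = −⟨z, w⟩²`), one has
`‖x'' − y''‖₂² = 2W + 2⟨z, w⟩² ≥ 2W`, with equality iff `⟨z, w⟩ = 0`. -/
theorem lift_norms_and_dist (D : ℕ) (x y : Fin D → ℝ) (W : ℝ)
    (hx : ∑ i, (x i) ^ 2 ≤ W) (hy : ∑ i, (y i) ^ 2 ≤ W) :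
    (∑ i, (liftA D x W i) ^ 2 = W)
    ∧ (∑ i, (liftB D y W i) ^ 2 = W)
    ∧ (∑ i, (liftA D x W i - liftB D y W i) ^ 2 = 2 * W - 2 * ∑ i, x i * y i)
    ∧ (∀ (d : ℕ) (z w : Fin d → ℤ),
        (∑ i, x i * y i) = -((∑ i, z i * w i : ℤ) : ℝ) ^ 2 →
          (∑ i, (liftA D x W i - liftB D y W i) ^ 2
              = 2 * W + 2 * ((∑ i, z i * w i : ℤ) : ℝ) ^ 2)
          ∧ 2 * W ≤ ∑ i, (liftA D x W i - liftB D y W i) ^ 2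
          ∧ (∑ i, (liftA D x W i - liftB D y W i) ^ 2 = 2 * W
              ↔ (∑ i, z i * w i) = 0)) := by
  have ha2 : Real.sqrt (W - ∑ i, (x i) ^ 2) ^ 2 = W - ∑ i, (x i) ^ 2 :=
    Real.sq_sqrt (by linarith)
  have hb2 : Real.sqrt (W - ∑ i, (y i) ^ 2) ^ 2 = W - ∑ i, (y i) ^ 2 :=
    Real.sq_sqrt (by linarith)
  have hA : ∑ i, (liftA D x W i) ^ 2 = W := by
    simp only [liftA, Fin.sum_univ_add, Fin.append_left, Fin.append_right,
      Fin.sum_univ_two, Matrix.cons_val_zero, Matrix.cons_val_one, Matrix.head_cons]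
    rw [ha2]; ring
  have hB : ∑ i, (liftB D y W i) ^ 2 = W := by
    simp only [liftB, Fin.sum_univ_add, Fin.append_left, Fin.append_right,
      Fin.sum_univ_two, Matrix.cons_val_zero, Matrix.cons_val_one, Matrix.head_cons]
    rw [hb2]; ring
  have hd : ∑ i, (liftA D x W i - liftB D y W i) ^ 2
      = 2 * W - 2 * ∑ i, x i * y i := by
    simp only [liftA, liftB, Fin.sum_univ_add, Fin.append_left, Fin.append_right,
      Fin.sum_univ_two, Matrix.cons_val_zero, Matrix.cons_val_one, Matrix.head_cons]
    have : ∑ i, (x i - y i) ^ 2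
        = (∑ i, (x i) ^ 2) + (∑ i, (y i) ^ 2) - 2 * ∑ i, x i * y i := by
      rw [Finset.mul_sum, ← Finset.sum_add_distrib, ← Finset.sum_sub_distrib]
      exact Finset.sum_congr rfl fun i _ => by ring
    rw [this]
    nlinarith [ha2, hb2]
  refine ⟨hA, hB, hd, ?_⟩
  intro d z w hzw
  have key : ∑ i, (liftA D x W i - liftB D y W i) ^ 2
      = 2 * W + 2 * ((∑ i, z i * w i : ℤ) : ℝ) ^ 2 := by
    rw [hd, hzw]; ring
  refine ⟨key, by nlinarith [sq_nonneg ((∑ i, z i * w i : ℤ) : ℝ)], ?_⟩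
  rw [key]
  constructor
  · intro h
    have : ((∑ i, z i * w i : ℤ) : ℝ) ^ 2 = 0 := by linarith
    have := pow_eq_zero_iff (n := 2) (by norm_num) |>.mp this
    exact_mod_cast this
  · intro h; rw [h]; norm_num
end
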